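/- For every α < 0, the function g(x,y) = log(e^{αx} + e^{αy} − (e^x + e^y)^α) is convex on ℝ²; consequently x ↦ x^α (with 0^α := 0) is Loewner sub-additive on 2×2 rank-one positive semidefinite matrices with nonnegative entries. -/

import Mathlib

noncomputable def Fp (β t V W : ℝ) : ℝ :=
  β - β*W + (2*β+1)*W*t - (1+β)*W*t^2 + V*t - (1+β)*V*t^2 - V*W*t + V*W*t^2

lemma polyA {β t V W : ℝ} (hβ : 1 ≤ β) (ht0 : 0 < t) (ht1 : t < 1)
    (hV0 : 0 ≤ V) (hV1 : V ≤ 1) (hW0 : 0 ≤ W) (hW1 : W ≤ 1 - t) :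
    0 ≤ Fp β t V W := by
  have hbr : 0 ≤ 2*β+1-(1+β)*t := by nlinarith [mul_nonneg (by linarith : (0:ℝ) ≤ 1+β) (by linarith : (0:ℝ) ≤ 1-t)]
  have h1 : 0 ≤ W*t*(2*β+1-(1+β)*t) := mul_nonneg (mul_nonneg hW0 ht0.le) hbr
  have h4 : 0 ≤ V*t*(1-t)*(1-W) :=
    mul_nonneg (mul_nonneg (mul_nonneg hV0 ht0.le) (by linarith)) (by linarith)
  have h2 : β*V*t^2 ≤ β*t := by
    have : V*t^2 ≤ t := by nlinarith [mul_nonneg ht0.le ht0.le, mul_le_one₀ hV1 ht0.le ht1.le, mul_nonneg (mul_nonneg hV0 ht0.le) ht0.le]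
    nlinarith [mul_le_mul_of_nonneg_left this (by linarith : (0:ℝ) ≤ β)]
  have h3 : β*t ≤ β*(1-W) := by
    have : t ≤ 1 - W := by linarith
    nlinarith [mul_le_mul_of_nonneg_left this (by linarith : (0:ℝ) ≤ β)]
  have hFe : Fp β t V W = β*(1-W) + W*t*(2*β+1-(1+β)*t) - β*V*t^2 + V*t*(1-t)*(1-W) := by
    unfold Fp; ring
  linarith [hFe, h1, h2, h3, h4]

lemma polyB {β t V W : ℝ} (hβ0 : 0 < β) (hβ1 : β ≤ 1) (ht0 : 0 < t) (ht2 : t ≤ 1/2)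
    (hV0 : 0 ≤ V) (hV1 : V ≤ 1) (hW0 : 0 ≤ W) (hW1 : W ≤ 1) (hWlb : 1 - t ≤ W) :
    0 ≤ Fp β t V W := by
  have ht1 : t < 1 := by linarith
  have hbr : 0 ≤ 2*β+1-(1+β)*t := by nlinarith [mul_nonneg (by linarith : (0:ℝ) ≤ 1+β) (by linarith : (0:ℝ) ≤ 1-t)]
  have hq : β*t ≤ (1-t)*(2*β+1-(1+β)*t) := by nlinarith [sq_nonneg (t - 1/2), mul_nonneg (by linarith : (0:ℝ) ≤ 1-β) (mul_nonneg ht0.le ht0.le)]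
  have h1 : β*V*t^2 ≤ β*t*t := by
    have h0 : V*t^2 ≤ t*t := by nlinarith [mul_nonneg ht0.le ht0.le]
    nlinarith [mul_le_mul_of_nonneg_left h0 hβ0.le]
  have h2 : t*((1-t)*(2*β+1-(1+β)*t)) ≤ t*(W*(2*β+1-(1+β)*t)) := by
    apply mul_le_mul_of_nonneg_left _ ht0.le
    exact mul_le_mul_of_nonneg_right hWlb hbr
  have h4 : 0 ≤ V*t*(1-t)*(1-W) :=
    mul_nonneg (mul_nonneg (mul_nonneg hV0 ht0.le) (by linarith)) (by linarith)
  have h3 : 0 ≤ β*(1-W) := mul_nonneg hβ0.le (by linarith)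
  have h5 : t*(β*t) ≤ t*((1-t)*(2*β+1-(1+β)*t)) := mul_le_mul_of_nonneg_left hq ht0.le
  have hFe : Fp β t V W = β*(1-W) + (t*(W*(2*β+1-(1+β)*t)) - β*V*t^2) + V*t*(1-t)*(1-W) := by
    unfold Fp; ring
  nlinarith [hFe, h1, h2, h3, h4, h5]

lemma Fp_nonneg {β t : ℝ} (hβ : 0 < β) (ht0 : 0 < t) (ht1 : t < 1) :
    0 ≤ Fp β t (t ^ β) ((1-t) ^ β) := by
  have h1t : (0:ℝ) < 1 - t := by linarith
  have hV0 : (0:ℝ) ≤ t ^ β := (Real.rpow_pos_of_pos ht0 β).le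
  have hW0 : (0:ℝ) ≤ (1-t) ^ β := (Real.rpow_pos_of_pos h1t β).le
  have hV1 : t ^ β ≤ 1 := Real.rpow_le_one ht0.le ht1.le hβ.le
  have hW1 : (1-t) ^ β ≤ 1 := Real.rpow_le_one h1t.le (by linarith) hβ.le
  rcases le_or_gt 1 β with hb | hb
  · have hW : (1-t) ^ β ≤ 1 - t := by
      calc (1-t) ^ β ≤ (1-t) ^ (1:ℝ) :=
            Real.rpow_le_rpow_of_exponent_ge h1t (by linarith) hb
        _ = 1 - t := Real.rpow_one _
    exact polyA hb ht0 ht1 hV0 hV1 hW0 hW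
  · rcases le_or_gt t (1/2) with ht | ht
    · have hW : 1 - t ≤ (1-t) ^ β := by
        calc (1-t) = (1-t) ^ (1:ℝ) := (Real.rpow_one _).symm
          _ ≤ (1-t) ^ β := Real.rpow_le_rpow_of_exponent_ge h1t (by linarith) hb.le
      exact polyB hβ hb.le ht0 ht hV0 hV1 hW0 hW1 hW
    · have hV : t ≤ t ^ β := by
        calc t = t ^ (1:ℝ) := (Real.rpow_one _).symm
          _ ≤ t ^ β := Real.rpow_le_rpow_of_exponent_ge ht0 ht1.le hb.le
      have key : 0 ≤ Fp β (1-t) ((1-t) ^ β) (t ^ β) :=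
        polyB hβ hb.le h1t (by linarith) hW0 hW1 hV0 hV1 (by simpa using hV)
      have heq : Fp β t (t ^ β) ((1-t) ^ β) = Fp β (1-t) ((1-t) ^ β) (t ^ β) := by
        unfold Fp; ring
      linarith [key, heq]




open Real in
lemma phi_convex {α : ℝ} (hα : α < 0) :
    ConvexOn ℝ Set.univ (fun s : ℝ => Real.log (Real.exp (α*s) + 1 - (Real.exp s + 1) ^ α)) := by
  set h : ℝ → ℝ := fun s => Real.exp (α*s) + 1 - (Real.exp s + 1) ^ α with hh_def
  set h₁ : ℝ → ℝ := fun s => α * Real.exp (α*s) - α * ((Real.exp s + 1) ^ (α-1) * Real.exp s) with h1_def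
  set h₂ : ℝ → ℝ := fun s => α * (Real.exp (α*s) * α) -
      α * ((α-1) * (Real.exp s + 1) ^ (α-2) * Real.exp s * Real.exp s
            + (Real.exp s + 1) ^ (α-1) * Real.exp s) with h2_def
  have hE1 : ∀ s : ℝ, (0:ℝ) < Real.exp s + 1 := fun s => by positivity
  have hpos : ∀ s, 0 < h s := by
    intro s
    have : (Real.exp s + 1) ^ α ≤ 1 :=
      Real.rpow_le_one_of_one_le_of_nonpos (by linarith [Real.exp_pos s]) hα.le
    have := Real.exp_pos (α*s)
    simp only [hh_def]; linarith
  have hd1 : ∀ s, HasDerivAt h (h₁ s) s := by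
    intro s
    have d1 : HasDerivAt (fun s : ℝ => Real.exp (α*s)) (α * Real.exp (α*s)) s := by
      have := (Real.hasDerivAt_exp (α*s)).comp s ((hasDerivAt_id s).const_mul α)
      simpa [mul_comm, Function.comp_def] using this
    have d2 : HasDerivAt (fun s : ℝ => (Real.exp s + 1) ^ α)
        (α * ((Real.exp s + 1) ^ (α-1) * Real.exp s)) s := by
      have db : HasDerivAt (fun s : ℝ => Real.exp s + 1) (Real.exp s) s :=
        (Real.hasDerivAt_exp s).add_const 1
      have H := (Real.hasDerivAt_rpow_const (p := α) (Or.inl (hE1 s).ne')).comp s db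
      simp only [Function.comp_def] at H
      exact H.congr_deriv (by ring)
    exact ((d1.add_const 1).sub d2)
  have hd2 : ∀ s, HasDerivAt h₁ (h₂ s) s := by
    intro s
    have d1 : HasDerivAt (fun s : ℝ => Real.exp (α*s)) (α * Real.exp (α*s)) s := by
      have := (Real.hasDerivAt_exp (α*s)).comp s ((hasDerivAt_id s).const_mul α)
      simpa [mul_comm, Function.comp_def] using this
    have d1' : HasDerivAt (fun s : ℝ => α * Real.exp (α*s)) (α * (α * Real.exp (α*s))) s :=
      d1.const_mul α
    have db : HasDerivAt (fun s : ℝ => Real.exp s + 1) (Real.exp s) s :=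
      (Real.hasDerivAt_exp s).add_const 1
    have d2 : HasDerivAt (fun s : ℝ => (Real.exp s + 1) ^ (α-1))
        ((α-1) * (Real.exp s + 1) ^ (α-2) * Real.exp s) s := by
      have H := (Real.hasDerivAt_rpow_const (p := α-1) (Or.inl (hE1 s).ne')).comp s db
      simp only [Function.comp_def] at H
      have e : α - 1 - 1 = α - 2 := by ring
      rw [e] at H
      convert H using 1
      try ring
    have d3 : HasDerivAt (fun s : ℝ => (Real.exp s + 1) ^ (α-1) * Real.exp s)
        ((α-1) * (Real.exp s + 1) ^ (α-2) * Real.exp s * Real.exp s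
          + (Real.exp s + 1) ^ (α-1) * Real.exp s) s := d2.mul (Real.hasDerivAt_exp s)
    have := d1'.sub (d3.const_mul α)
    simp only [h1_def, h2_def]
    exact this.congr_deriv (by ring)
  have key : ∀ s, 0 ≤ h₂ s * h s - h₁ s * h₁ s := by
    intro s
    simp only [hh_def, h1_def, h2_def]
    set β : ℝ := -α with hβ_def
    have hαβ : α = -β := by simp [hβ_def]
    have hβ : 0 < β := by simp only [hβ_def]; linarith
    have hEp := Real.exp_pos s
    have hE1' : (0:ℝ) < Real.exp s + 1 := by linarith
    set t : ℝ := Real.exp s / (Real.exp s + 1) with ht_def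
    have ht0 : 0 < t := div_pos hEp hE1'
    have ht1 : t < 1 := (div_lt_one hE1').mpr (by linarith)
    have h1tpos : (0:ℝ) < 1 - t := by linarith
    have h1t : 1 - t = (Real.exp s + 1)⁻¹ := by
      rw [ht_def]; field_simp; ring
    set V : ℝ := t ^ β with hV_def
    set W : ℝ := (1-t) ^ β with hW_def
    have hV0 : 0 < V := Real.rpow_pos_of_pos ht0 β
    have hW0 : 0 < W := Real.rpow_pos_of_pos h1tpos β
    have hWe : (Real.exp s + 1) ^ α = W := by
      rw [hW_def, h1t, Real.inv_rpow hE1'.le, ← Real.rpow_neg hE1'.le]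
      rw [hαβ]
    have hA1 : (Real.exp s + 1) ^ (α-1) = W * (1-t) := by
      rw [Real.rpow_sub hE1', Real.rpow_one, hWe, h1t, div_eq_mul_inv]
    have hA2 : (Real.exp s + 1) ^ (α-2) = W * (1-t)^2 := by
      rw [show α-2 = α - ((2:ℕ):ℝ) by norm_num, Real.rpow_sub hE1', Real.rpow_natCast,
        hWe, h1t, inv_pow, div_eq_mul_inv]
    have hexps : Real.exp s = t / (1-t) := by
      rw [h1t, ht_def]; field_simp
    have hEe : Real.exp (α*s) = W / V := by
      have h1 : Real.exp s ^ α = Real.exp (α*s) := by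
        rw [Real.rpow_def_of_pos hEp, Real.log_exp, mul_comm]
      rw [← h1, hexps, Real.div_rpow ht0.le h1tpos.le, hαβ,
        Real.rpow_neg ht0.le, Real.rpow_neg h1tpos.le, ← hV_def, ← hW_def]
      field_simp
    rw [hEe, hWe, hA1, hA2, hexps, hαβ]
    have hFp : 0 ≤ Fp β t V W := Fp_nonneg hβ ht0 ht1
    have hfin : (0:ℝ) ≤ β * W * Fp β t V W / V :=
      div_nonneg (mul_nonneg (mul_nonneg hβ.le hW0.le) hFp) hV0.le
    refine hfin.trans (le_of_eq ?_)
    unfold Fp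
    field_simp
    ring
  have hcont : ContinuousOn (fun s : ℝ => Real.log (h s)) Set.univ := by
    intro x _
    exact (((hd1 x).continuousAt).log (hpos x).ne').continuousWithinAt
  have hlog : ∀ s, HasDerivAt (fun s => Real.log (h s)) (h₁ s / h s) s :=
    fun s => (hd1 s).log (hpos s).ne'
  have hquot : ∀ s, HasDerivAt (fun s => h₁ s / h s)
      ((h₂ s * h s - h₁ s * h₁ s) / (h s)^2) s :=
    fun s => (hd2 s).div (hd1 s) (hpos s).ne'
  have := convexOn_of_hasDerivWithinAt2_nonneg (f := fun s => Real.log (h s))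
    (f' := fun s => h₁ s / h s) (f'' := fun s => (h₂ s * h s - h₁ s * h₁ s) / (h s)^2)
    convex_univ hcont
    (fun x _ => (hlog x).hasDerivWithinAt)
    (fun x _ => (hquot x).hasDerivWithinAt)
    (fun x _ => div_nonneg (key x) (sq_nonneg _))
  exact this


lemma g_convex {α : ℝ} (hα : α < 0) :
    ConvexOn ℝ Set.univ (fun p : ℝ × ℝ =>
      Real.log (Real.exp (α * p.1) + Real.exp (α * p.2) -
        (Real.exp p.1 + Real.exp p.2) ^ α)) := by
  have hid : ∀ p : ℝ × ℝ,
      Real.log (Real.exp (α * p.1) + Real.exp (α * p.2) - (Real.exp p.1 + Real.exp p.2) ^ α)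
      = α * p.2 + Real.log (Real.exp (α*(p.1 - p.2)) + 1 - (Real.exp (p.1 - p.2) + 1) ^ α) := by
    rintro ⟨x, y⟩
    simp only
    have h1 : Real.exp x + Real.exp y = Real.exp y * (Real.exp (x-y) + 1) := by
      rw [mul_add, ← Real.exp_add, mul_one]; ring_nf
    have h2 : (Real.exp x + Real.exp y) ^ α = Real.exp (α*y) * (Real.exp (x-y) + 1) ^ α := by
      rw [h1, Real.mul_rpow (Real.exp_pos y).le (by positivity)]
      congr 1
      rw [Real.rpow_def_of_pos (Real.exp_pos y), Real.log_exp, mul_comm]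
    have h3 : Real.exp (α*x) = Real.exp (α*y) * Real.exp (α*(x-y)) := by
      rw [← Real.exp_add]; ring_nf
    have hpos : 0 < Real.exp (α*(x-y)) + 1 - (Real.exp (x-y) + 1) ^ α := by
      have : (Real.exp (x-y) + 1) ^ α ≤ 1 :=
        Real.rpow_le_one_of_one_le_of_nonpos (by linarith [Real.exp_pos (x-y)]) hα.le
      linarith [Real.exp_pos (α*(x-y))]
    have h4 : Real.exp (α * x) + Real.exp (α * y) - (Real.exp x + Real.exp y) ^ α
        = Real.exp (α*y) * (Real.exp (α*(x-y)) + 1 - (Real.exp (x-y) + 1) ^ α) := by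
      rw [h3, h2]; ring
    rw [h4, Real.log_mul (Real.exp_ne_zero _) hpos.ne', Real.log_exp]
  have hfun : (fun p : ℝ × ℝ =>
      Real.log (Real.exp (α * p.1) + Real.exp (α * p.2) - (Real.exp p.1 + Real.exp p.2) ^ α))
      = fun p : ℝ × ℝ =>
        α * p.2 + Real.log (Real.exp (α*(p.1 - p.2)) + 1 - (Real.exp (p.1 - p.2) + 1) ^ α) :=
    funext hid
  rw [hfun]
  have c2 : ConvexOn ℝ Set.univ (fun p : ℝ × ℝ => α * p.2) := by
    refine ⟨convex_univ, fun p _ q _ a b _ _ _ => le_of_eq ?_⟩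
    simp only [Prod.smul_snd, Prod.snd_add, smul_eq_mul]
    ring
  have L : (ℝ × ℝ) →ₗ[ℝ] ℝ := LinearMap.fst ℝ ℝ ℝ - LinearMap.snd ℝ ℝ ℝ
  have c1 : ConvexOn ℝ Set.univ (fun p : ℝ × ℝ =>
      Real.log (Real.exp (α*(p.1 - p.2)) + 1 - (Real.exp (p.1 - p.2) + 1) ^ α)) := by
    have := (phi_convex hα).comp_linearMap (LinearMap.fst ℝ ℝ ℝ - LinearMap.snd ℝ ℝ ℝ)
    simpa [Function.comp_def] using this
  exact c2.add c1


lemma G_pos {α : ℝ} (hα : α < 0) {u v : ℝ} (hu : 0 < u) (hv : 0 < v) :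
    0 < u ^ α + v ^ α - (u+v) ^ α := by
  have h1 : (u+v) ^ α < u ^ α := Real.rpow_lt_rpow_of_neg hu (by linarith) hα
  have h2 : 0 < v ^ α := Real.rpow_pos_of_pos hv α
  linarith

lemma G_nonneg {α : ℝ} (hα : α < 0) {u v : ℝ} (hu : 0 ≤ u) (hv : 0 ≤ v) :
    0 ≤ u ^ α + v ^ α - (u+v) ^ α := by
  rcases hu.eq_or_lt with h | h
  · rw [← h, Real.zero_rpow hα.ne, zero_add]; simp
  · rcases hv.eq_or_lt with h' | h'
    · rw [← h', Real.zero_rpow hα.ne, add_zero]; simp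
    · exact (G_pos hα h h').le

lemma G_mid {α : ℝ} (hα : α < 0) {a b c d : ℝ} (ha : 0 < a) (hb : 0 < b)
    (hc : 0 < c) (hd : 0 < d) :
    ((a*b) ^ α + (c*d) ^ α - (a*b + c*d) ^ α) ^ 2 ≤
      ((a*a) ^ α + (c*c) ^ α - (a*a + c*c) ^ α) *
        ((b*b) ^ α + (d*d) ^ α - (b*b + d*d) ^ α) := by
  have k : ∀ u : ℝ, 0 < u → Real.exp (α * Real.log u) = u ^ α := fun u hu => by
    rw [Real.rpow_def_of_pos hu, mul_comm]
  have gval : ∀ u v : ℝ, 0 < u → 0 < v →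
      Real.log (Real.exp (α * Real.log u) + Real.exp (α * Real.log v) -
        (Real.exp (Real.log u) + Real.exp (Real.log v)) ^ α)
      = Real.log (u ^ α + v ^ α - (u+v) ^ α) := by
    intro u v hu hv
    rw [k u hu, k v hv, Real.exp_log hu, Real.exp_log hv]
  have hcvx := (g_convex hα).2 (Set.mem_univ (Real.log (a*a), Real.log (c*c)))
    (Set.mem_univ (Real.log (b*b), Real.log (d*d)))
    (by norm_num : (0:ℝ) ≤ 1/2) (by norm_num : (0:ℝ) ≤ 1/2) (by norm_num)
  have hmid : ((1:ℝ)/2) • ((Real.log (a*a), Real.log (c*c)) : ℝ × ℝ)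
      + ((1:ℝ)/2) • ((Real.log (b*b), Real.log (d*d)) : ℝ × ℝ)
      = ((Real.log (a*b), Real.log (c*d)) : ℝ × ℝ) := by
    have l1 := Real.log_mul ha.ne' ha.ne'
    have l2 := Real.log_mul hb.ne' hb.ne'
    have l3 := Real.log_mul hc.ne' hc.ne'
    have l4 := Real.log_mul hd.ne' hd.ne'
    have l5 := Real.log_mul ha.ne' hb.ne'
    have l6 := Real.log_mul hc.ne' hd.ne'
    ext
    · simp only [Prod.fst_add, Prod.smul_fst, smul_eq_mul]
      rw [l1, l2, l5]; ring
    · simp only [Prod.snd_add, Prod.smul_snd, smul_eq_mul]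
      rw [l3, l4, l6]; ring
  rw [hmid] at hcvx
  simp only [smul_eq_mul] at hcvx
  rw [gval _ _ (mul_pos ha hb) (mul_pos hc hd), gval _ _ (mul_pos ha ha) (mul_pos hc hc),
    gval _ _ (mul_pos hb hb) (mul_pos hd hd)] at hcvx
  have hGm := G_pos hα (mul_pos ha hb) (mul_pos hc hd)
  have hP := G_pos hα (mul_pos ha ha) (mul_pos hc hc)
  have hQ := G_pos hα (mul_pos hb hb) (mul_pos hd hd)
  calc ((a*b) ^ α + (c*d) ^ α - (a*b + c*d) ^ α) ^ 2
      = Real.exp (Real.log ((a*b) ^ α + (c*d) ^ α - (a*b + c*d) ^ α)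
          + Real.log ((a*b) ^ α + (c*d) ^ α - (a*b + c*d) ^ α)) := by
        rw [Real.exp_add, Real.exp_log hGm, sq]
    _ ≤ Real.exp (Real.log ((a*a) ^ α + (c*c) ^ α - (a*a + c*c) ^ α)
          + Real.log ((b*b) ^ α + (d*d) ^ α - (b*b + d*d) ^ α)) := by
        apply Real.exp_le_exp.2; linarith
    _ = _ := by rw [Real.exp_add, Real.exp_log hP, Real.exp_log hQ]

lemma psd2 {p q r : ℝ} (hp : 0 ≤ p) (hq : 0 ≤ q) (hr : r^2 ≤ p*q) :
    Matrix.PosSemidef !![p, r; r, q] := by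
  rw [Matrix.posSemidef_iff_dotProduct_mulVec]
  constructor
  · ext i j
    fin_cases i <;> fin_cases j <;>
      simp [Matrix.conjTranspose_apply]
  · intro x
    have hx : star x = x := by
      funext i; simp
    rw [hx]
    simp [dotProduct, Matrix.mulVec, Fin.sum_univ_two]
    rcases hp.eq_or_lt with h | h
    · have hr0 : r = 0 := by nlinarith
      rw [← h, hr0]
      have := mul_nonneg hq (mul_self_nonneg (x 1))
      nlinarith
    · nlinarith [sq_nonneg (p * x 0 + r * x 1), mul_nonneg (sub_nonneg.2 hr) (sq_nonneg (x 1))]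


/-- For `α < 0`, `g(x,y) = log(e^{αx} + e^{αy} - (e^x + e^y)^α)` is convex on `ℝ²`;
consequently `x ↦ x^α` (with `0^α := 0`) is Loewner sub-additive on `2×2` rank-one PSD
matrices with nonnegative entries. -/
theorem stmt19 (α : ℝ) (hα : α < 0) :
    ConvexOn ℝ Set.univ (fun p : ℝ × ℝ =>
      Real.log (Real.exp (α * p.1) + Real.exp (α * p.2) -
        (Real.exp p.1 + Real.exp p.2) ^ α)) ∧
    ∀ a b c d : ℝ, 0 ≤ a → 0 ≤ b → 0 ≤ c → 0 ≤ d →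
      let A := Matrix.vecMulVec ![a, b] ![a, b]
      let B := Matrix.vecMulVec ![c, d] ![c, d]
      (A.map (fun x => x ^ α) + B.map (fun x => x ^ α) -
        (A + B).map fun x => x ^ α).PosSemidef := by
  refine ⟨g_convex hα, ?_⟩
  intro a b c d ha hb hc hd A B
  set p : ℝ := (a*a) ^ α + (c*c) ^ α - (a*a + c*c) ^ α with hp_def
  set q : ℝ := (b*b) ^ α + (d*d) ^ α - (b*b + d*d) ^ α with hq_def
  set r : ℝ := (a*b) ^ α + (c*d) ^ α - (a*b + c*d) ^ α with hr_def
  have hp : 0 ≤ p := G_nonneg hα (mul_nonneg ha ha) (mul_nonneg hc hc)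
  have hq : 0 ≤ q := G_nonneg hα (mul_nonneg hb hb) (mul_nonneg hd hd)
  have hrsq : r ^ 2 ≤ p * q := by
    have hzero : ∀ x y : ℝ, x = 0 → x ^ α + y ^ α - (x + y) ^ α = 0 := by
      intro x y hx
      rw [hx, Real.zero_rpow hα.ne, zero_add]; ring
    rcases ha.eq_or_lt with h | hA
    · have hr0 : r = 0 := by rw [hr_def]; exact hzero _ _ (by rw [← h]; ring)
      rw [hr0]; simpa using mul_nonneg hp hq
    · rcases hb.eq_or_lt with h | hB
      · have hr0 : r = 0 := by rw [hr_def]; exact hzero _ _ (by rw [← h]; ring)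
        rw [hr0]; simpa using mul_nonneg hp hq
      · rcases hc.eq_or_lt with h | hC
        · have hr0 : r = 0 := by
            rw [hr_def, add_comm ((a*b) ^ α), add_comm (a*b)]
            exact hzero _ _ (by rw [← h]; ring)
          rw [hr0]; simpa using mul_nonneg hp hq
        · rcases hd.eq_or_lt with h | hD
          · have hr0 : r = 0 := by
              rw [hr_def, add_comm ((a*b) ^ α), add_comm (a*b)]
              exact hzero _ _ (by rw [← h]; ring)
            rw [hr0]; simpa using mul_nonneg hp hq
          · exact G_mid hα hA hB hC hD
  have hM : A.map (fun x => x ^ α) + B.map (fun x => x ^ α) -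
      (A + B).map (fun x => x ^ α) = !![p, r; r, q] := by
    ext i j
    fin_cases i <;> fin_cases j <;>
      simp [A, B, Matrix.vecMulVec_apply, hp_def, hq_def, hr_def, mul_comm]
  rw [hM]
  exact psd2 hp hq hrsq
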